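/- Let A_μ (μ = 0,1,2,3) be unitary 4×4 complex matrices satisfying A_μ A_ν + A_ν A_μ = −2 η_{μν} I for all μ,ν. Suppose Θ and Θ' are conjugate-linear involutions of ℂ⁴ (additive maps with Θ(c·v) = c̄·Θ(v) for all c ∈ ℂ, v ∈ ℂ⁴, and Θ∘Θ = id) each of which commutes with multiplication by every A_μ (Θ(A_μ v) = A_μ Θ(v) for all v). Then there exists c ∈ ℂ with c·c̄ = 1 such that Θ'(v) = c·Θ(v) for all v ∈ ℂ⁴: the charge conjugation operator is unique up to a complex phase. -/

import Mathlib

open Matrix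

/-- The Minkowski metric `diag(1,-1,-1,-1)` as a real 4×4 matrix. -/
noncomputable def minkowskiEta : Matrix (Fin 4) (Fin 4) ℝ :=
  Matrix.diagonal ![1, -1, -1, -1]

abbrev CMat := Matrix (Fin 4) (Fin 4) ℂ

lemma cc_trace_zero_of_anticomm (X Y : CMat) (s : ℂ) (hs : s ≠ 0)
    (h : X * Y = -(Y * X)) (hY : Y * Y = s • 1) : X.trace = 0 := by
  have h1 : (X * (Y * Y)).trace = s * X.trace := by
    rw [hY, Matrix.mul_smul, Matrix.mul_one, Matrix.trace_smul, smul_eq_mul]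
  have h2 : (X * (Y * Y)).trace = -(X * (Y * Y)).trace := by
    calc (X * (Y * Y)).trace = ((X * Y) * Y).trace := by rw [mul_assoc]
      _ = (Y * (X * Y)).trace := Matrix.trace_mul_comm _ _
      _ = ((Y * X) * Y).trace := by rw [mul_assoc]
      _ = ((-(X * Y)) * Y).trace := by rw [show Y * X = -(X*Y) from by rw [h, neg_neg]]
      _ = -(X * (Y * Y)).trace := by rw [neg_mul, Matrix.trace_neg, mul_assoc]
  have h3 : (X * (Y * Y)).trace = 0 := by linear_combination h2 / 2
  rw [h3] at h1
  exact (mul_eq_zero.mp h1.symm).resolve_left hs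

noncomputable def ccU (C G H : CMat) (s t : ℂ) : CMat :=
  1 + s • C + t • G + (s * t) • H

lemma cc_master (C G H : CMat)
    (hC2 : C * C = 1) (hG2 : G * G = 1)
    (hCG : C * G = H) (hGC : G * C = H)
    (hCH : C * H = G) (hHC : H * C = G)
    (hGH : G * H = C) (hHG : H * G = C)
    (hHH : H * H = 1) (s t s' t' : ℂ) :
    ccU C G H s t * ccU C G H s' t' =
      (1 + s*s' + t*t' + (s*t)*(s'*t')) • (1 : CMat)
      + (s + s' + s*t*t' + t*s'*t') • C
      + (t + t' + s*s'*t' + s*t*s') • G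
      + (s'*t' + s*t' + t*s' + s*t) • H := by
  simp only [ccU, mul_add, add_mul, smul_mul_assoc, mul_smul_comm, smul_smul,
    one_mul, mul_one, hC2, hG2, hCG, hGC, hCH, hHC, hGH, hHG, hHH]
  module

lemma cc_conjE (C G H E : CMat) (hEC : E * C = -(C * E)) (hEG : E * G = G * E)
    (hEH : E * H = -(H * E)) (s t : ℂ) :
    E * ccU C G H s t = ccU C G H (-s) t * E := by
  simp only [ccU, mul_add, add_mul, one_mul, mul_one, mul_smul_comm, smul_mul_assoc,
    hEC, hEG, hEH]
  module

lemma cc_conjF (C G H F : CMat) (hFC : F * C = -(C * F)) (hFG : F * G = -(G * F))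
    (hFH : F * H = H * F) (s t : ℂ) :
    F * ccU C G H s t = ccU C G H (-s) (-t) * F := by
  simp only [ccU, mul_add, add_mul, one_mul, mul_one, mul_smul_comm, smul_mul_assoc,
    hFC, hFG, hFH]
  module

lemma cc_commM (C G H M : CMat) (hMC : M * C = C * M) (hMG : M * G = G * M)
    (hMH : M * H = H * M) (s t : ℂ) :
    M * ccU C G H s t = ccU C G H s t * M := by
  simp only [ccU, mul_add, add_mul, one_mul, mul_one, mul_smul_comm, smul_mul_assoc,
    hMC, hMG, hMH]

lemma cc_ne_zero_exists_mulVec {R : CMat} (h : R ≠ 0) : ∃ v, R.mulVec v ≠ 0 := by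
  by_contra hc
  push_neg at hc
  apply h
  ext i j
  have := congrFun (hc (Pi.single j 1)) i
  simpa [Matrix.mulVec_single] using this

lemma cc_rank_one (R : Fin 4 → CMat)
    (hidem : ∀ i, R i * R i = R i)
    (horth : ∀ i j, i ≠ j → R i * R j = 0)
    (hne : ∀ i, R i ≠ 0) :
    ∀ i, Module.finrank ℂ (LinearMap.range (Matrix.mulVecLin (R i))) = 1 := by
  set V : Fin 4 → Submodule ℂ (Fin 4 → ℂ) :=
    fun i => LinearMap.range (Matrix.mulVecLin (R i)) with hV
  have hfix : ∀ i w, w ∈ V i → (R i).mulVec w = w := by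
    rintro i w ⟨y, rfl⟩
    simp only [Matrix.mulVecLin_apply, Matrix.mulVec_mulVec, hidem]
  have hkill : ∀ i j w, i ≠ j → w ∈ V j → (R i).mulVec w = 0 := by
    rintro i j w hij ⟨y, rfl⟩
    simp only [Matrix.mulVecLin_apply, Matrix.mulVec_mulVec, horth i j hij,
      Matrix.zero_mulVec]
  let φ : (∀ i : Fin 4, V i) →ₗ[ℂ] (Fin 4 → ℂ) :=
    { toFun := fun f => ∑ i, (f i : Fin 4 → ℂ)
      map_add' := by intro f g; simp [Finset.sum_add_distrib]
      map_smul' := by intro c f; simp [Finset.smul_sum] }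
  have hinj : Function.Injective φ := by
    rw [← LinearMap.ker_eq_bot, LinearMap.ker_eq_bot']
    intro f hf
    have hf' : (∑ i, (f i : Fin 4 → ℂ)) = 0 := hf
    funext j
    apply Subtype.ext
    have h0 : (R j).mulVec (∑ i, (f i : Fin 4 → ℂ)) = 0 := by rw [hf', Matrix.mulVec_zero]
    have h1 : (R j).mulVec (∑ i, (f i : Fin 4 → ℂ)) = (f j : Fin 4 → ℂ) := by
      rw [show (R j).mulVec (∑ i, (f i : Fin 4 → ℂ)) =
          ∑ i, (R j).mulVec (f i : Fin 4 → ℂ) from map_sum (R j).mulVecLin _ _]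
      rw [Finset.sum_eq_single j]
      · exact hfix j _ (f j).2
      · intro i _ hij; exact hkill j i _ (Ne.symm hij) (f i).2
      · intro h; exact absurd (Finset.mem_univ j) h
    have : (f j : Fin 4 → ℂ) = 0 := by rw [← h1, h0]
    simpa using this
  have hle : Module.finrank ℂ (∀ i : Fin 4, V i) ≤ 4 := by
    have := LinearMap.finrank_le_finrank_of_injective hinj
    simpa [Module.finrank_pi] using this
  have hsum : Module.finrank ℂ (∀ i : Fin 4, V i)
      = ∑ i, Module.finrank ℂ (V i) := Module.finrank_pi_fintype ℂ
  have hpos : ∀ i, 0 < Module.finrank ℂ (V i) := by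
    intro i
    have hVne : V i ≠ ⊥ := by
      intro hbot
      obtain ⟨v, hv⟩ := cc_ne_zero_exists_mulVec (hne i)
      exact hv (by
        have : (R i).mulVecLin v ∈ V i := ⟨v, rfl⟩
        rw [hbot] at this
        simpa using this)
    have : Nontrivial (V i) := Submodule.nontrivial_iff_ne_bot.mpr hVne
    exact Module.finrank_pos
  rw [hsum, Fin.sum_univ_four] at hle
  have p0 := hpos 0; have p1 := hpos 1; have p2 := hpos 2; have p3 := hpos 3
  have h0 : Module.finrank ℂ (V 0) = 1 := by omega
  have h1 : Module.finrank ℂ (V 1) = 1 := by omega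
  have h2 : Module.finrank ℂ (V 2) = 1 := by omega
  have h3 : Module.finrank ℂ (V 3) = 1 := by omega
  intro i
  fin_cases i
  exacts [h0, h1, h2, h3]

lemma cc_exists_phase (C G E F E' F' M : CMat)
    (hC2 : C * C = 1) (hG2 : G * G = 1) (hCGc : C * G = G * C)
    (trC : C.trace = 0) (trG : G.trace = 0) (trCG : (C * G).trace = 0)
    (hEC : E * C = -(C * E)) (hEG : E * G = G * E) (hE : E' * E = 1)
    (hFC : F * C = -(C * F)) (hFG : F * G = -(G * F)) (hF : F' * F = 1)
    (hMC : M * C = C * M) (hMG : M * G = G * M)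
    (hME : M * E = E * M) (hMF : M * F = F * M) :
    ∃ c : ℂ, ∀ v : Fin 4 → ℂ, M.mulVec v = c • v := by
  obtain ⟨H, hH⟩ : ∃ H : CMat, H = C * G := ⟨_, rfl⟩
  have hCG' : C * G = H := hH.symm
  have hGC' : G * C = H := by rw [← hCGc, hH]
  have hCH : C * H = G := by rw [hH, ← mul_assoc, hC2, one_mul]
  have hHC : H * C = G := by rw [hH, mul_assoc, ← hCGc, ← mul_assoc, hC2, one_mul]
  have hGH : G * H = C := by rw [hH, ← mul_assoc, ← hCGc, mul_assoc, hG2, mul_one]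
  have hHG : H * G = C := by rw [hH, mul_assoc, hG2, mul_one]
  have hHH : H * H = 1 := by
    calc H * H = H * (C * G) := by nth_rewrite 2 [hH]; rfl
      _ = (H * C) * G := by rw [mul_assoc]
      _ = G * G := by rw [hHC]
      _ = 1 := hG2
  have trH : H.trace = 0 := by rw [hH]; exact trCG
  have hEH : E * H = -(H * E) := by
    rw [hH, ← mul_assoc, hEC, neg_mul, mul_assoc, hEG, ← mul_assoc]
  have hFH : F * H = H * F := by
    rw [hH, ← mul_assoc, hFC, neg_mul, mul_assoc, hFG, mul_neg, neg_neg, ← mul_assoc]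
  have hMH : M * H = H * M := by
    rw [hH, ← mul_assoc, hMC, mul_assoc, hMG, ← mul_assoc]
  have hmaster := cc_master C G H hC2 hG2 hCG' hGC' hCH hHC hGH hHG hHH
  -- the four spectral projections
  obtain ⟨R, hRdef⟩ : ∃ R : Fin 4 → CMat, R = fun i =>
      (4⁻¹ : ℂ) • ccU C G H (![1, 1, -1, -1] i) (![1, -1, 1, -1] i) := ⟨_, rfl⟩
  have hR0 : R 0 = (4⁻¹ : ℂ) • ccU C G H 1 1 := by rw [hRdef]; norm_num
  have hR1 : R 1 = (4⁻¹ : ℂ) • ccU C G H 1 (-1) := by rw [hRdef]; norm_num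
  have hR2 : R 2 = (4⁻¹ : ℂ) • ccU C G H (-1) 1 := by rw [hRdef]; norm_num [Matrix.cons_val_two, Matrix.cons_val_three]
  have hR3 : R 3 = (4⁻¹ : ℂ) • ccU C G H (-1) (-1) := by rw [hRdef]; norm_num [Matrix.cons_val_two, Matrix.cons_val_three]
  have hidemU : ∀ s t : ℂ, s * s = 1 → t * t = 1 →
      ((4⁻¹ : ℂ) • ccU C G H s t) * ((4⁻¹ : ℂ) • ccU C G H s t)
        = (4⁻¹ : ℂ) • ccU C G H s t := by
    intro s t hs ht
    rw [smul_mul_assoc, mul_smul_comm, smul_smul, hmaster]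
    simp only [ccU]
    match_scalars
    · linear_combination (16⁻¹ * (1 + t * t)) * hs + (8⁻¹ : ℂ) * ht
    · linear_combination (8⁻¹ * s) * ht
    · linear_combination (8⁻¹ * t) * hs
    · ring
  have horthS : ∀ s t t' : ℂ, s * s = 1 →
      ((4⁻¹ : ℂ) • ccU C G H s t) * ((4⁻¹ : ℂ) • ccU C G H (-s) t') = 0 := by
    intro s t t' hs
    rw [smul_mul_assoc, mul_smul_comm, smul_smul, hmaster]
    rw [show (0 : CMat) = (0:ℂ) • (1:CMat) + (0:ℂ) • C + (0:ℂ) • G + (0:ℂ) • H by module]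
    match_scalars
    · linear_combination (-(16⁻¹) * (1 + t * t')) * hs
    · ring
    · linear_combination (-(16⁻¹) * (t + t')) * hs
    · ring
  have horthT : ∀ s s' t : ℂ, t * t = 1 →
      ((4⁻¹ : ℂ) • ccU C G H s t) * ((4⁻¹ : ℂ) • ccU C G H s' (-t)) = 0 := by
    intro s s' t ht
    rw [smul_mul_assoc, mul_smul_comm, smul_smul, hmaster]
    rw [show (0 : CMat) = (0:ℂ) • (1:CMat) + (0:ℂ) • C + (0:ℂ) • G + (0:ℂ) • H by module]
    match_scalars
    · linear_combination (-(16⁻¹) * (1 + s * s')) * ht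
    · linear_combination (-(16⁻¹) * (s + s')) * ht
    · ring
    · ring
  have hRR : ∀ i, R i * R i = R i := by
    intro i
    fin_cases i
    · show R 0 * R 0 = R 0
      rw [hR0]; exact hidemU 1 1 (by norm_num) (by norm_num)
    · show R 1 * R 1 = R 1
      rw [hR1]; exact hidemU 1 (-1) (by norm_num) (by norm_num)
    · show R 2 * R 2 = R 2
      rw [hR2]; exact hidemU (-1) 1 (by norm_num) (by norm_num)
    · show R 3 * R 3 = R 3
      rw [hR3]; exact hidemU (-1) (-1) (by norm_num) (by norm_num)
  have horth : ∀ i j, i ≠ j → R i * R j = 0 := by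
    intro i j hij
    fin_cases i <;> fin_cases j
    · exact absurd rfl hij
    · show R 0 * R 1 = 0
      rw [hR0, hR1]; exact horthT 1 1 1 (by norm_num)
    · show R 0 * R 2 = 0
      rw [hR0, hR2]; exact horthS 1 1 1 (by norm_num)
    · show R 0 * R 3 = 0
      rw [hR0, hR3]; exact horthS 1 1 (-1) (by norm_num)
    · show R 1 * R 0 = 0
      rw [hR1, hR0]
      have := horthT 1 1 (-1) (by norm_num : (-1:ℂ) * (-1) = 1)
      rwa [neg_neg] at this
    · exact absurd rfl hij
    · show R 1 * R 2 = 0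
      rw [hR1, hR2]; exact horthS 1 (-1) 1 (by norm_num)
    · show R 1 * R 3 = 0
      rw [hR1, hR3]; exact horthS 1 (-1) (-1) (by norm_num)
    · show R 2 * R 0 = 0
      rw [hR2, hR0]
      have := horthS (-1) 1 1 (by norm_num : (-1:ℂ) * (-1) = 1)
      rwa [neg_neg] at this
    · show R 2 * R 1 = 0
      rw [hR2, hR1]
      have := horthS (-1) 1 (-1) (by norm_num : (-1:ℂ) * (-1) = 1)
      rwa [neg_neg] at this
    · exact absurd rfl hij
    · show R 2 * R 3 = 0
      rw [hR2, hR3]; exact horthT (-1) (-1) 1 (by norm_num)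
    · show R 3 * R 0 = 0
      rw [hR3, hR0]
      have := horthS (-1) (-1) 1 (by norm_num : (-1:ℂ) * (-1) = 1)
      rwa [neg_neg] at this
    · show R 3 * R 1 = 0
      rw [hR3, hR1]
      have := horthS (-1) (-1) (-1) (by norm_num : (-1:ℂ) * (-1) = 1)
      rwa [neg_neg] at this
    · show R 3 * R 2 = 0
      rw [hR3, hR2]
      have := horthT (-1) (-1) (-1) (by norm_num : (-1:ℂ) * (-1) = 1)
      rwa [neg_neg] at this
    · exact absurd rfl hij
  have htrR : ∀ i, (R i).trace = 1 := by
    intro i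
    have htrU : ∀ s t : ℂ, ((4⁻¹ : ℂ) • ccU C G H s t).trace = 1 := by
      intro s t
      simp only [ccU, Matrix.trace_smul, Matrix.trace_add, Matrix.trace_one, trC, trG, trH,
        smul_zero, add_zero, smul_eq_mul]
      norm_num
    fin_cases i
    · show (R 0).trace = 1
      rw [hR0]; exact htrU _ _
    · show (R 1).trace = 1
      rw [hR1]; exact htrU _ _
    · show (R 2).trace = 1
      rw [hR2]; exact htrU _ _
    · show (R 3).trace = 1
      rw [hR3]; exact htrU _ _
  have hRne : ∀ i, R i ≠ 0 := by
    intro i h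
    have := htrR i
    rw [h] at this
    simp at this
  have hRsum : R 0 + R 1 + R 2 + R 3 = 1 := by
    rw [hR0, hR1, hR2, hR3]
    simp only [ccU]
    module
  have hER0 : E * R 0 = R 2 * E := by
    rw [hR0, hR2, mul_smul_comm, smul_mul_assoc]
    congr 1
    have := cc_conjE C G H E hEC hEG hEH 1 1
    simpa using this
  have hER1 : E * R 1 = R 3 * E := by
    rw [hR1, hR3, mul_smul_comm, smul_mul_assoc]
    congr 1
    have := cc_conjE C G H E hEC hEG hEH 1 (-1)
    simpa using this
  have hFR0 : F * R 0 = R 3 * F := by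
    rw [hR0, hR3, mul_smul_comm, smul_mul_assoc]
    congr 1
    have := cc_conjF C G H F hFC hFG hFH 1 1
    simpa using this
  have hMR : ∀ i, M * R i = R i * M := by
    have hgen : ∀ s t : ℂ, M * ((4⁻¹:ℂ) • ccU C G H s t)
        = ((4⁻¹:ℂ) • ccU C G H s t) * M := by
      intro s t
      rw [mul_smul_comm, smul_mul_assoc, cc_commM C G H M hMC hMG hMH]
    intro i
    fin_cases i
    · show M * R 0 = R 0 * M
      rw [hR0]; exact hgen _ _
    · show M * R 1 = R 1 * M
      rw [hR1]; exact hgen _ _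
    · show M * R 2 = R 2 * M
      rw [hR2]; exact hgen _ _
    · show M * R 3 = R 3 * M
      rw [hR3]; exact hgen _ _
  obtain ⟨V, hVdef⟩ : ∃ V : Fin 4 → Submodule ℂ (Fin 4 → ℂ),
      V = fun i => LinearMap.range (Matrix.mulVecLin (R i)) := ⟨_, rfl⟩
  have hrank : ∀ i, Module.finrank ℂ (V i) = 1 := by
    rw [hVdef]; exact cc_rank_one R hRR horth hRne
  have hfix : ∀ i w, w ∈ V i → (R i).mulVec w = w := by
    intro i w hw
    rw [hVdef] at hw
    obtain ⟨y, rfl⟩ := hw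
    simp only [Matrix.mulVecLin_apply, Matrix.mulVec_mulVec, hRR]
  have hmemV : ∀ i v, (R i).mulVec v ∈ V i := by
    intro i v; rw [hVdef]; exact ⟨v, rfl⟩
  have hexu : ∀ i, ∃ u ∈ V i, u ≠ 0 := by
    intro i
    have : Nontrivial (V i) := by
      apply Module.nontrivial_of_finrank_pos (R := ℂ)
      rw [hrank i]; norm_num
    obtain ⟨x, hx⟩ := exists_ne (0 : V i)
    exact ⟨x, x.2, fun h => hx (Subtype.ext h)⟩
  have act : ∀ i, ∃ ci : ℂ, ∀ w ∈ V i, M.mulVec w = ci • w := by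
    intro i
    obtain ⟨u, huV, hu0⟩ := hexu i
    have hspan : V i = Submodule.span ℂ {u} := by
      refine (Submodule.eq_of_le_of_finrank_le ?_ ?_).symm
      · exact Submodule.span_le.mpr (by simpa using huV)
      · rw [hrank i, finrank_span_singleton hu0]
    have hMu : M.mulVec u ∈ V i := by
      have h1 : (R i).mulVec (M.mulVec u) = M.mulVec u := by
        rw [Matrix.mulVec_mulVec, ← hMR i, ← Matrix.mulVec_mulVec, hfix i u huV]
      rw [← h1]; exact hmemV i _
    rw [hspan] at hMu
    obtain ⟨ci, hci⟩ := Submodule.mem_span_singleton.mp hMu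
    refine ⟨ci, fun w hw => ?_⟩
    rw [hspan] at hw
    obtain ⟨a, ha⟩ := Submodule.mem_span_singleton.mp hw
    rw [← ha, Matrix.mulVec_smul, ← hci, smul_comm]
  choose cc hcc using act
  have flip : ∀ (i j : Fin 4) (K K' : CMat), K' * K = 1 → M * K = K * M →
      K * R i = R j * K → cc i = cc j := by
    intro i j K K' hK' hMK hKR
    obtain ⟨u, huV, hu0⟩ := hexu i
    have hKu : K.mulVec u ∈ V j := by
      have h1 : (R j).mulVec (K.mulVec u) = K.mulVec u := by
        rw [Matrix.mulVec_mulVec, ← hKR, ← Matrix.mulVec_mulVec, hfix i u huV]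
      rw [← h1]; exact hmemV j _
    have hKu0 : K.mulVec u ≠ 0 := by
      intro h0
      apply hu0
      have h2 : (K' * K).mulVec u = u := by rw [hK', Matrix.one_mulVec]
      rw [← Matrix.mulVec_mulVec, h0, Matrix.mulVec_zero] at h2
      exact h2.symm
    have e1 : M.mulVec (K.mulVec u) = cc j • K.mulVec u := hcc j _ hKu
    have e2 : M.mulVec (K.mulVec u) = cc i • K.mulVec u := by
      rw [Matrix.mulVec_mulVec, hMK, ← Matrix.mulVec_mulVec, hcc i u huV,
        Matrix.mulVec_smul]
    have h3 : (cc j - cc i) • K.mulVec u = 0 := by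
      rw [sub_smul, ← e1, e2, sub_self]
    rcases smul_eq_zero.mp h3 with h | h
    · exact (sub_eq_zero.mp h).symm
    · exact absurd h hKu0
  have c02 : cc 0 = cc 2 := flip 0 2 E E' hE hME hER0
  have c13 : cc 1 = cc 3 := flip 1 3 E E' hE hME hER1
  have c03 : cc 0 = cc 3 := flip 0 3 F F' hF hMF hFR0
  refine ⟨cc 0, fun v => ?_⟩
  have hv : v = (R 0).mulVec v + (R 1).mulVec v + (R 2).mulVec v + (R 3).mulVec v := by
    conv_lhs => rw [← Matrix.one_mulVec v, ← hRsum]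
    simp [Matrix.add_mulVec]
  nth_rewrite 1 [hv]
  rw [Matrix.mulVec_add, Matrix.mulVec_add, Matrix.mulVec_add]
  rw [hcc 0 _ (hmemV 0 v), hcc 1 _ (hmemV 1 v), hcc 2 _ (hmemV 2 v),
    hcc 3 _ (hmemV 3 v)]
  rw [c13, ← c02, ← c03]
  rw [← smul_add, ← smul_add, ← smul_add, ← hv]

/-- The charge conjugation operator is unique up to a complex phase: if
`A_μ` are unitary 4×4 complex Majorana matrices satisfying the Clifford relations and
`Θ`, `Θ'` are conjugate-linear involutions of `ℂ⁴` commuting with multiplication by every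
`A_μ`, then `Θ' = c • Θ` for some `c : ℂ` with `c * c̄ = 1`. -/
theorem charge_conjugation_unique_up_to_phase
    (A : Fin 4 → Matrix (Fin 4) (Fin 4) ℂ)
    (hunitary : ∀ μ, (A μ)ᴴ * A μ = 1)
    (hcliff : ∀ μ ν, A μ * A ν + A ν * A μ =
      (-2 * (minkowskiEta μ ν : ℂ)) • (1 : Matrix (Fin 4) (Fin 4) ℂ))
    (Θ Θ' : (Fin 4 → ℂ) → (Fin 4 → ℂ))
    (hadd : ∀ v w, Θ (v + w) = Θ v + Θ w)
    (hsmul : ∀ (c : ℂ) (v : Fin 4 → ℂ), Θ (c • v) = (starRingEnd ℂ c) • Θ v)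
    (hinvol : ∀ v, Θ (Θ v) = v)
    (hcomm : ∀ μ v, Θ ((A μ).mulVec v) = (A μ).mulVec (Θ v))
    (hadd' : ∀ v w, Θ' (v + w) = Θ' v + Θ' w)
    (hsmul' : ∀ (c : ℂ) (v : Fin 4 → ℂ), Θ' (c • v) = (starRingEnd ℂ c) • Θ' v)
    (hinvol' : ∀ v, Θ' (Θ' v) = v)
    (hcomm' : ∀ μ v, Θ' ((A μ).mulVec v) = (A μ).mulVec (Θ' v)) :
    ∃ c : ℂ, c * (starRingEnd ℂ c) = 1 ∧ ∀ v, Θ' v = c • Θ v := by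
  -- basic Clifford consequences
  have anti : ∀ μ ν, μ ≠ ν → A μ * A ν = -(A ν * A μ) := by
    intro μ ν h
    have hη : (minkowskiEta μ ν : ℂ) = 0 := by
      rw [show minkowskiEta μ ν = 0 from Matrix.diagonal_apply_ne _ h]
      norm_num
    have hc := hcliff μ ν
    rw [hη] at hc
    simp only [mul_zero, zero_smul] at hc
    exact eq_neg_of_add_eq_zero_left hc
  have sq : ∀ μ, A μ * A μ = (-(minkowskiEta μ μ) : ℂ) • (1 : Matrix (Fin 4) (Fin 4) ℂ) := by
    intro μ
    have hc := hcliff μ μ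
    have h2 : (2:ℂ) • (A μ * A μ) = (2:ℂ) • (((-(minkowskiEta μ μ) : ℂ))
        • (1 : Matrix (Fin 4) (Fin 4) ℂ)) := by
      rw [smul_smul]
      rw [show (2:ℂ) * (-(minkowskiEta μ μ) : ℂ) = -2 * (minkowskiEta μ μ : ℂ) by ring]
      rw [← hc, two_smul]
    exact smul_right_injective _ (two_ne_zero) h2
  have sq0 : A 0 * A 0 = -1 := by
    have h := sq 0
    rw [show ((minkowskiEta 0 0 : ℝ) : ℂ) = 1 by norm_num [minkowskiEta]] at h
    rw [h]; simp
  have sq1 : A 1 * A 1 = 1 := by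
    have h := sq 1
    rw [show ((minkowskiEta 1 1 : ℝ) : ℂ) = -1 by norm_num [minkowskiEta]] at h
    rw [h]; simp
  have sq2 : A 2 * A 2 = 1 := by
    have h := sq 2
    rw [show ((minkowskiEta 2 2 : ℝ) : ℂ) = -1 by norm_num [minkowskiEta, Matrix.cons_val_two, Matrix.cons_val_three]] at h
    rw [h]; simp
  have sq3 : A 3 * A 3 = 1 := by
    have h := sq 3
    rw [show ((minkowskiEta 3 3 : ℝ) : ℂ) = -1 by norm_num [minkowskiEta, Matrix.cons_val_two, Matrix.cons_val_three]] at h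
    rw [h]; simp
  -- the conjugate-linear composite as a linear map and its matrix
  let L : (Fin 4 → ℂ) →ₗ[ℂ] (Fin 4 → ℂ) :=
    { toFun := fun v => Θ' (Θ v)
      map_add' := fun v w => by
        show Θ' (Θ (v + w)) = Θ' (Θ v) + Θ' (Θ w)
        rw [hadd, hadd']
      map_smul' := fun c v => by
        show Θ' (Θ (c • v)) = (RingHom.id ℂ) c • Θ' (Θ v)
        rw [hsmul, hsmul']
        simp }
  obtain ⟨M, hMdef⟩ : ∃ M : CMat, M = LinearMap.toMatrix' L := ⟨_, rfl⟩
  have hMv : ∀ v, M.mulVec v = Θ' (Θ v) := by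
    intro v
    rw [hMdef, ← Matrix.toLin'_apply, Matrix.toLin'_toMatrix']
    rfl
  have hMA : ∀ μ, M * A μ = A μ * M := by
    intro μ
    have key : ∀ v, (M * A μ).mulVec v = (A μ * M).mulVec v := by
      intro v
      rw [← Matrix.mulVec_mulVec, ← Matrix.mulVec_mulVec, hMv, hMv, hcomm, hcomm']
    ext i j
    have h := congrFun (key (Pi.single j 1)) i
    simpa [Matrix.mulVec_single] using h
  -- set up the data for cc_exists_phase
  have h23 : ∀ X : CMat, X = X := fun X => rfl
  have hcomm023 : A 0 * (A 2 * A 3) = (A 2 * A 3) * A 0 := by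
    calc A 0 * (A 2 * A 3) = (A 0 * A 2) * A 3 := by rw [mul_assoc]
      _ = (-(A 2 * A 0)) * A 3 := by rw [anti 0 2 (by decide)]
      _ = -(A 2 * (A 0 * A 3)) := by rw [neg_mul, mul_assoc]
      _ = -(A 2 * (-(A 3 * A 0))) := by rw [anti 0 3 (by decide)]
      _ = A 2 * (A 3 * A 0) := by rw [mul_neg, neg_neg]
      _ = (A 2 * A 3) * A 0 := by rw [mul_assoc]
  have hcomm123 : A 1 * (A 2 * A 3) = (A 2 * A 3) * A 1 := by
    calc A 1 * (A 2 * A 3) = (A 1 * A 2) * A 3 := by rw [mul_assoc]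
      _ = (-(A 2 * A 1)) * A 3 := by rw [anti 1 2 (by decide)]
      _ = -(A 2 * (A 1 * A 3)) := by rw [neg_mul, mul_assoc]
      _ = -(A 2 * (-(A 3 * A 1))) := by rw [anti 1 3 (by decide)]
      _ = A 2 * (A 3 * A 1) := by rw [mul_neg, neg_neg]
      _ = (A 2 * A 3) * A 1 := by rw [mul_assoc]
  have h2323 : (A 2 * A 3) * (A 2 * A 3) = -1 := by
    calc (A 2 * A 3) * (A 2 * A 3) = A 2 * (A 3 * (A 2 * A 3)) := by rw [mul_assoc]
      _ = A 2 * ((A 3 * A 2) * A 3) := by rw [mul_assoc]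
      _ = A 2 * ((-(A 2 * A 3)) * A 3) := by rw [anti 3 2 (by decide)]
      _ = A 2 * (-(A 2 * (A 3 * A 3))) := by rw [neg_mul, mul_assoc]
      _ = A 2 * (-(A 2)) := by rw [sq3, mul_one]
      _ = -(A 2 * A 2) := by rw [mul_neg]
      _ = -1 := by rw [sq2]
  have h232 : (A 2 * A 3) * A 2 = -(A 3) := by
    calc (A 2 * A 3) * A 2 = A 2 * (A 3 * A 2) := by rw [mul_assoc]
      _ = A 2 * (-(A 2 * A 3)) := by rw [anti 3 2 (by decide)]
      _ = -((A 2 * A 2) * A 3) := by rw [mul_neg, mul_assoc]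
      _ = -(A 3) := by rw [sq2, one_mul]
  have h223 : A 2 * (A 2 * A 3) = A 3 := by
    rw [← mul_assoc, sq2, one_mul]
  -- the G matrix
  obtain ⟨G, hGdef⟩ : ∃ G : CMat, G = Complex.I • (A 2 * A 3) := ⟨_, rfl⟩
  have hG2 : G * G = 1 := by
    rw [hGdef, smul_mul_assoc, mul_smul_comm, smul_smul, Complex.I_mul_I, h2323]
    simp
  have hCGc : A 1 * G = G * A 1 := by
    rw [hGdef, mul_smul_comm, smul_mul_assoc, hcomm123]
  -- traces
  have trC : (A 1).trace = 0 := by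
    refine cc_trace_zero_of_anticomm (A 1) (A 0) (-1) (by norm_num) (anti 1 0 (by decide)) ?_
    rw [sq0]; simp
  have tr23 : (A 2 * A 3).trace = 0 := by
    refine cc_trace_zero_of_anticomm (A 2 * A 3) (A 2) 1 (by norm_num) ?_ ?_
    · rw [h232, h223]
    · rw [sq2]; simp
  have trG : G.trace = 0 := by
    rw [hGdef, Matrix.trace_smul, tr23, smul_zero]
  have tr123 : (A 1 * (A 2 * A 3)).trace = 0 := by
    refine cc_trace_zero_of_anticomm (A 1 * (A 2 * A 3)) (A 0) (-1) (by norm_num) ?_ ?_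
    · calc (A 1 * (A 2 * A 3)) * A 0 = A 1 * ((A 2 * A 3) * A 0) := by rw [mul_assoc]
        _ = A 1 * (A 0 * (A 2 * A 3)) := by rw [← hcomm023]
        _ = (A 1 * A 0) * (A 2 * A 3) := by rw [mul_assoc]
        _ = (-(A 0 * A 1)) * (A 2 * A 3) := by rw [anti 1 0 (by decide)]
        _ = -(A 0 * (A 1 * (A 2 * A 3))) := by rw [neg_mul, mul_assoc]
    · rw [sq0]; simp
  have trCG : (A 1 * G).trace = 0 := by
    rw [hGdef, mul_smul_comm, Matrix.trace_smul, tr123, smul_zero]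
  -- anticommutation with E = A 0 and F = A 2
  have hEC : A 0 * A 1 = -(A 1 * A 0) := anti 0 1 (by decide)
  have hEG : A 0 * G = G * A 0 := by
    rw [hGdef, mul_smul_comm, smul_mul_assoc, hcomm023]
  have hE : (-(A 0)) * A 0 = 1 := by rw [neg_mul, sq0, neg_neg]
  have hFC : A 2 * A 1 = -(A 1 * A 2) := anti 2 1 (by decide)
  have hFG : A 2 * G = -(G * A 2) := by
    rw [hGdef, mul_smul_comm, smul_mul_assoc, h223, h232]
    simp
  have hF : A 2 * A 2 = 1 := sq2
  -- M commutes with everything needed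
  have hMC : M * A 1 = A 1 * M := hMA 1
  have hMG : M * G = G * M := by
    rw [hGdef, mul_smul_comm, smul_mul_assoc]
    congr 1
    rw [← mul_assoc, hMA 2, mul_assoc, hMA 3, ← mul_assoc]
  have hME : M * A 0 = A 0 * M := hMA 0
  have hMF : M * A 2 = A 2 * M := hMA 2
  obtain ⟨c, hc⟩ := cc_exists_phase (A 1) G (A 0) (A 2) (-(A 0)) (A 2) M
    sq1 hG2 hCGc trC trG trCG hEC hEG hE hFC hFG hF hMC hMG hME hMF
  have key : ∀ v, Θ' (Θ v) = c • v := by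
    intro v
    rw [← hMv]; exact hc v
  have hfinal : ∀ v, Θ' v = c • Θ v := by
    intro v
    conv_lhs => rw [← hinvol v]
    exact key (Θ v)
  refine ⟨c, ?_, hfinal⟩
  have h1 : (starRingEnd ℂ c * c) • (Pi.single 0 1 : Fin 4 → ℂ)
      = (Pi.single 0 1 : Fin 4 → ℂ) := by
    calc (starRingEnd ℂ c * c) • (Pi.single 0 1 : Fin 4 → ℂ)
        = starRingEnd ℂ c • (c • (Pi.single 0 1 : Fin 4 → ℂ)) := by rw [mul_smul]
      _ = starRingEnd ℂ c • (Θ' (Θ (Pi.single 0 1))) := by rw [key]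
      _ = Θ' (c • Θ (Pi.single 0 1)) := by rw [hsmul']
      _ = Θ' (Θ' (Pi.single 0 1)) := by rw [← hfinal]
      _ = Pi.single 0 1 := hinvol' _
  have h2 := congrFun h1 0
  simp only [Pi.smul_apply, Pi.single_eq_same, smul_eq_mul, mul_one] at h2
  rw [mul_comm]
  exact h2
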